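/- In the setting k ⊂ K_0 ⊂ K ⊂ k̄ with O the integral closure of A in K, let f(z) = Σ_{i=0}^n a_i z^i ∈ O[z] be a polynomial not vanishing identically. Then for every nonzero root λ ∈ k̄ of f of multiplicity ν one has |λ|_∞^ν ≥ (max_{0≤i≤n} [[a_i]])^{-[K_0:k]}. -/

import Mathlib

noncomputable section
open scoped Classical
set_option synthInstance.maxHeartbeats 1000000
set_option maxHeartbeats 1000000

namespace St7Aux

open Polynomial

variable {L : Type*} [NormedField L]

lemma na_le_of_lt (hna : ∀ x y : L, ‖x + y‖ ≤ max ‖x‖ ‖y‖) {x y : L}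
    (h : ‖y‖ < ‖x‖) : ‖x‖ ≤ ‖x + y‖ := by
  have h2 : ‖x‖ ≤ max ‖x + y‖ ‖y‖ := by
    have := hna (x + y) (-y)
    simpa using this
  rcases le_max_iff.mp h2 with h3 | h3
  · exact h3
  · exact absurd h3 (not_le.mpr h)

lemma na_add_eq (hna : ∀ x y : L, ‖x + y‖ ≤ max ‖x‖ ‖y‖) {x y : L}
    (h : ‖y‖ < ‖x‖) : ‖x + y‖ = ‖x‖ := by
  refine le_antisymm (le_trans (hna x y) (max_le le_rfl h.le)) (na_le_of_lt hna h)

lemma na_sum_le (hna : ∀ x y : L, ‖x + y‖ ≤ max ‖x‖ ‖y‖) {ι : Type*} (s : Finset ι)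
    (f : ι → L) {B : ℝ} (hB : 0 ≤ B) (h : ∀ i ∈ s, ‖f i‖ ≤ B) :
    ‖∑ i ∈ s, f i‖ ≤ B := by
  induction s using Finset.induction_on with
  | empty => simpa using hB
  | insert _ _ hni ih =>
    rename_i a s'
    rw [Finset.sum_insert hni]
    refine le_trans (hna _ _) (max_le (h a (by simp)) (ih fun i hi => h i (by simp [hi])))

lemma na_sum_lt (hna : ∀ x y : L, ‖x + y‖ ≤ max ‖x‖ ‖y‖) {ι : Type*} (s : Finset ι)
    (f : ι → L) {B : ℝ} (hB : 0 < B) (h : ∀ i ∈ s, ‖f i‖ < B) :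
    ‖∑ i ∈ s, f i‖ < B := by
  induction s using Finset.induction_on with
  | empty => simpa using hB
  | insert _ _ hni ih =>
    rename_i a s'
    rw [Finset.sum_insert hni]
    exact lt_of_le_of_lt (hna _ _)
      (max_lt (h a (by simp)) (ih fun i hi => h i (by simp [hi])))

lemma norm_mprod (s : Multiset L) : ‖s.prod‖ = (s.map fun x => ‖x‖).prod := by
  induction s using Multiset.induction_on with
  | empty => simp
  | cons a s ih => simp [norm_mul, ih]

lemma prod_monic (s : Multiset L) : ((s.map fun a => X - C a).prod).Monic := by
  have := monic_multiset_prod_of_monic s (fun a => X - C a) (fun a _ => monic_X_sub_C a)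
  simpa using this

lemma prod_natDegree (s : Multiset L) :
    ((s.map fun a => X - C a).prod).natDegree = Multiset.card s := by
  rw [natDegree_multiset_prod_of_monic]
  · simp [Multiset.map_map, Function.comp_def]
  · intro f hf
    rcases Multiset.mem_map.mp hf with ⟨a, _, rfl⟩
    exact monic_X_sub_C a

lemma coeff_zero_prod (s : Multiset L) :
    ((s.map fun a => X - C a).prod).coeff 0 = (s.map fun a => -a).prod := by
  induction s using Multiset.induction_on with
  | empty => simp
  | cons a s ih =>
    simp only [Multiset.map_cons, Multiset.prod_cons, mul_coeff_zero, ih]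
    simp

lemma norm_coeff_zero_prod (s : Multiset L) :
    ‖((s.map fun a => X - C a).prod).coeff 0‖ = (s.map fun a => ‖a‖).prod := by
  rw [coeff_zero_prod, norm_mprod, Multiset.map_map]
  simp [Function.comp_def]

lemma prod_norm_nonneg (s : Multiset L) : 0 ≤ (s.map fun a => ‖a‖).prod :=
  Multiset.prod_nonneg (by
    intro x hx
    rcases Multiset.mem_map.mp hx with ⟨a, _, rfl⟩
    exact norm_nonneg a)

lemma prod_norm_pos (s : Multiset L) (h : ∀ μ ∈ s, μ ≠ 0) :
    0 < (s.map fun a => ‖a‖).prod :=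
  Multiset.prod_pos (by
    intro x hx
    rcases Multiset.mem_map.mp hx with ⟨a, ha, rfl⟩
    exact norm_pos_iff.mpr (h a ha))

lemma prod_norm_le_pow {t : ℝ} (ht : 0 ≤ t) (s : Multiset L) (h : ∀ μ ∈ s, ‖μ‖ ≤ t) :
    (s.map fun a => ‖a‖).prod ≤ t ^ Multiset.card s := by
  induction s using Multiset.induction_on with
  | empty => simp
  | cons a s ih =>
    simp only [Multiset.map_cons, Multiset.prod_cons, Multiset.card_cons, pow_succ']
    exact mul_le_mul (h a (by simp)) (ih fun μ hμ => h μ (by simp [hμ]))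
      (prod_norm_nonneg s) ht

/-- Coefficient bound for products over "small" roots. -/
lemma coeffA (hna : ∀ x y : L, ‖x + y‖ ≤ max ‖x‖ ‖y‖) {t : ℝ} (ht : 0 ≤ t)
    (s : Multiset L) (h : ∀ μ ∈ s, ‖μ‖ ≤ t) :
    ∀ i, i ≤ Multiset.card s →
      ‖((s.map fun a => X - C a).prod).coeff i‖ ≤ t ^ (Multiset.card s - i) := by
  induction s using Multiset.induction_on with
  | empty =>
    intro i hi
    have : i = 0 := by simpa using hi
    subst this
    simp
  | cons a s ih =>
    intro i hi
    have hQ := ih (fun μ hμ => h μ (by simp [hμ]))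
    set Q := (s.map fun x => X - C x).prod with hQdef
    have hstep : ((a ::ₘ s).map fun x => X - C x).prod = (X - C a) * Q := by
      simp [hQdef]
    rw [hstep]
    have hco : ∀ j, ((X - C a) * Q).coeff j = (X * Q).coeff j - a * Q.coeff j := by
      intro j
      rw [sub_mul, coeff_sub, coeff_C_mul]
    have hcard : Multiset.card (a ::ₘ s) = Multiset.card s + 1 := by simp
    rw [hcard] at hi ⊢
    have hanorm : ‖a‖ ≤ t := h a (by simp)
    rcases Nat.eq_zero_or_pos i with rfl | hipos
    · rw [hco 0]
      have : (X * Q).coeff 0 = 0 := by simp [mul_coeff_zero]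
      rw [this, zero_sub, norm_neg, norm_mul]
      have h1 : ‖Q.coeff 0‖ ≤ t ^ (Multiset.card s - 0) := hQ 0 (Nat.zero_le _)
      calc ‖a‖ * ‖Q.coeff 0‖ ≤ t * t ^ (Multiset.card s) := by
            exact mul_le_mul hanorm (by simpa using h1) (norm_nonneg _) ht
        _ = t ^ (Multiset.card s + 1 - 0) := by rw [Nat.sub_zero, pow_succ']
    · obtain ⟨j, rfl⟩ : ∃ j, i = j + 1 := ⟨i - 1, by omega⟩
      rw [hco (j + 1), coeff_X_mul]
      have hsub : (j + 1 : ℕ) ≤ Multiset.card s + 1 := hi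
      have hj' : j ≤ Multiset.card s := by omega
      have hQj : ‖Q.coeff j‖ ≤ t ^ (Multiset.card s - j) := hQ j hj'
      have hgoal : Multiset.card s + 1 - (j + 1) = Multiset.card s - j := by omega
      rw [hgoal]
      have hterm2 : ‖a * Q.coeff (j + 1)‖ ≤ t ^ (Multiset.card s - j) := by
        rcases Nat.lt_or_ge j (Multiset.card s) with hlt | hge
        · have hQj1 : ‖Q.coeff (j + 1)‖ ≤ t ^ (Multiset.card s - (j + 1)) := hQ (j + 1) hlt
          rw [norm_mul]
          calc ‖a‖ * ‖Q.coeff (j + 1)‖ ≤ t * t ^ (Multiset.card s - (j + 1)) :=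
              mul_le_mul hanorm hQj1 (norm_nonneg _) ht
            _ = t ^ (Multiset.card s - j) := by
              rw [← pow_succ']
              congr 1
              omega
        · have : Q.coeff (j + 1) = 0 := by
            apply coeff_eq_zero_of_natDegree_lt
            rw [hQdef, prod_natDegree]
            omega
          rw [this, mul_zero, norm_zero]
          positivity
      calc ‖Q.coeff j - a * Q.coeff (j + 1)‖ ≤ max ‖Q.coeff j‖ ‖a * Q.coeff (j+1)‖ := by
            have := hna (Q.coeff j) (-(a * Q.coeff (j + 1)))
            simpa [sub_eq_add_neg] using this
        _ ≤ t ^ (Multiset.card s - j) := max_le hQj hterm2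

/-- Strict coefficient bound for products over "large" roots. -/
lemma coeffB (hna : ∀ x y : L, ‖x + y‖ ≤ max ‖x‖ ‖y‖) {t : ℝ} (ht : 0 < t)
    (s : Multiset L) (h : ∀ μ ∈ s, t < ‖μ‖) :
    ∀ j, 1 ≤ j →
      ‖((s.map fun a => X - C a).prod).coeff j‖ * t ^ j < (s.map fun a => ‖a‖).prod := by
  induction s using Multiset.induction_on with
  | empty =>
    intro j hj
    have : ((0 : Multiset L).map fun a => X - C a).prod = 1 := by simp
    rw [this, coeff_one]
    have : j ≠ 0 := by omega
    simp [this]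
  | cons a s ih =>
    intro j hj
    have hrec := ih (fun μ hμ => h μ (by simp [hμ]))
    set Q := (s.map fun x => X - C x).prod with hQdef
    have hstep : ((a ::ₘ s).map fun x => X - C x).prod = (X - C a) * Q := by
      simp [hQdef]
    rw [hstep]
    have hanorm : t < ‖a‖ := h a (by simp)
    have hapos : 0 < ‖a‖ := lt_trans ht hanorm
    have hPn' : 0 < (s.map fun x => ‖x‖).prod :=
      prod_norm_pos s fun μ hμ => by
        have := h μ (by simp [hμ]); intro h0; rw [h0] at this; simp at this
        exact absurd this (not_lt.mpr ht.le)
    have hprodcons : ((a ::ₘ s).map fun x => ‖x‖).prod = ‖a‖ * (s.map fun x => ‖x‖).prod := by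
      simp
    rw [hprodcons]
    obtain ⟨jj, rfl⟩ : ∃ jj, j = jj + 1 := ⟨j - 1, by omega⟩
    have hco : ((X - C a) * Q).coeff (jj + 1) = Q.coeff jj - a * Q.coeff (jj + 1) := by
      rw [sub_mul, coeff_sub, coeff_C_mul, coeff_X_mul]
    rw [hco]
    have hterm1 : ‖Q.coeff jj‖ * t ^ (jj + 1) < ‖a‖ * (s.map fun x => ‖x‖).prod := by
      rcases Nat.eq_zero_or_pos jj with rfl | hjj
      · rw [pow_one]
        have h0 : ‖Q.coeff 0‖ = (s.map fun x => ‖x‖).prod := norm_coeff_zero_prod s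
        rw [h0, mul_comm]
        exact mul_lt_mul_of_pos_right hanorm hPn'
      · have := hrec jj hjj
        calc ‖Q.coeff jj‖ * t ^ (jj + 1) = (‖Q.coeff jj‖ * t ^ jj) * t := by ring
          _ < (s.map fun x => ‖x‖).prod * t := mul_lt_mul_of_pos_right this ht
          _ < (s.map fun x => ‖x‖).prod * ‖a‖ := mul_lt_mul_of_pos_left hanorm hPn'
          _ = ‖a‖ * (s.map fun x => ‖x‖).prod := mul_comm _ _
    have hterm2 : ‖a * Q.coeff (jj + 1)‖ * t ^ (jj + 1) < ‖a‖ * (s.map fun x => ‖x‖).prod := by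
      rw [norm_mul, mul_assoc]
      exact mul_lt_mul_of_pos_left (hrec (jj + 1) (by omega)) hapos
    have hmax : ‖Q.coeff jj - a * Q.coeff (jj + 1)‖ ≤
        max ‖Q.coeff jj‖ ‖a * Q.coeff (jj + 1)‖ := by
      have := hna (Q.coeff jj) (-(a * Q.coeff (jj + 1)))
      simpa [sub_eq_add_neg] using this
    have htp : (0:ℝ) < t ^ (jj + 1) := by positivity
    calc ‖Q.coeff jj - a * Q.coeff (jj + 1)‖ * t ^ (jj + 1)
        ≤ max ‖Q.coeff jj‖ ‖a * Q.coeff (jj + 1)‖ * t ^ (jj + 1) :=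
          mul_le_mul_of_nonneg_right hmax htp.le
      _ = max (‖Q.coeff jj‖ * t ^ (jj + 1)) (‖a * Q.coeff (jj + 1)‖ * t ^ (jj + 1)) :=
          (max_mul_of_nonneg _ _ htp.le)
      _ < ‖a‖ * (s.map fun x => ‖x‖).prod := max_lt hterm1 hterm2



lemma coeff_prod_bound (hna : ∀ x y : L, ‖x + y‖ ≤ max ‖x‖ ‖y‖) {ι : Type*}
    (s : Finset ι) (P : ι → Polynomial L) {D : ℝ} (hD : 0 ≤ D)
    (h : ∀ i ∈ s, ∀ j, ‖(P i).coeff j‖ ≤ D) :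
    ∀ j, ‖(∏ i ∈ s, P i).coeff j‖ ≤ D ^ s.card := by
  induction s using Finset.induction_on with
  | empty =>
    intro j
    rw [Finset.prod_empty, coeff_one]
    rcases eq_or_ne j 0 with rfl | hj
    · simp
    · simp [hj]
  | insert _ _ hni ih =>
    rename_i a s'
    intro j
    rw [Finset.prod_insert hni, Finset.card_insert_of_notMem hni, coeff_mul]
    refine na_sum_lt_aux hna _ _ (by positivity) ?_
    rintro ⟨x, y⟩ hxy
    rw [norm_mul, pow_succ']
    exact mul_le_mul (h a (by simp) x)
      (ih (fun i hi k => h i (by simp [hi]) k) y) (norm_nonneg _) hD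
  where na_sum_lt_aux := @na_sum_le L _

/-- The key "Newton polygon" style estimate. -/
lemma core (hna : ∀ x y : L, ‖x + y‖ ≤ max ‖x‖ ‖y‖)
    (s : Multiset L) (c lam : L) (B : ℝ)
    (h0t : 0 < ‖lam‖) (ht1 : ‖lam‖ ≤ 1)
    (hB : ∀ j, ‖(C c * (s.map fun a => X - C a).prod).coeff j‖ ≤ B)
    (h1 : 1 ≤ ‖(C c * (s.map fun a => X - C a).prod).coeff 0‖) :
    B⁻¹ ≤ ‖lam‖ ^ (s.count lam) := by
  set t := ‖lam‖ with htdef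
  set s₁ := s.filter (fun μ => ‖μ‖ ≤ t) with hs₁
  set s₂ := s.filter (fun μ => ¬ ‖μ‖ ≤ t) with hs₂
  have hsplit : s₁ + s₂ = s := Multiset.filter_add_not _ s
  set P₁ := (s₁.map fun a => X - C a).prod with hP₁
  set P₂ := (s₂.map fun a => X - C a).prod with hP₂
  have hprod : (s.map fun a => X - C a).prod = P₁ * P₂ := by
    rw [← hsplit, Multiset.map_add, Multiset.prod_add]
  set a := Multiset.card s₁ with ha
  set Pn1 := (s₁.map fun x => ‖x‖).prod with hPn1
  set Pn2 := (s₂.map fun x => ‖x‖).prod with hPn2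
  have hs₂big : ∀ μ ∈ s₂, t < ‖μ‖ := by
    intro μ hμ
    exact not_le.mp (Multiset.mem_filter.mp hμ).2
  have hs₁small : ∀ μ ∈ s₁, ‖μ‖ ≤ t := fun μ hμ => (Multiset.mem_filter.mp hμ).2
  have hPn2pos : 0 < Pn2 := prod_norm_pos s₂ (fun μ hμ => by
    intro h0
    have := hs₂big μ hμ
    rw [h0, norm_zero] at this
    exact absurd this (not_lt.mpr h0t.le))
  have hPn1nonneg : 0 ≤ Pn1 := prod_norm_nonneg s₁
  -- the key coefficient estimate
  have hP₁monic : P₁.Monic := prod_monic s₁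
  have hP₁deg : P₁.natDegree = a := prod_natDegree s₁
  have hcoeffa : Pn2 ≤ ‖(P₁ * P₂).coeff a‖ := by
    rw [coeff_mul]
    have hmem : ((a : ℕ), (0 : ℕ)) ∈ Finset.HasAntidiagonal.antidiagonal a := by simp
    rw [← Finset.add_sum_erase _ _ hmem]
    have hmain : P₁.coeff a * P₂.coeff 0 = P₂.coeff 0 := by
      have : P₁.coeff a = 1 := by
        rw [← hP₁deg]
        exact hP₁monic.coeff_natDegree
      rw [this, one_mul]
    rw [hmain]
    have hP₂0 : ‖P₂.coeff 0‖ = Pn2 := norm_coeff_zero_prod s₂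
    have hrest : ‖∑ x ∈ (Finset.HasAntidiagonal.antidiagonal a).erase (a, 0),
        P₁.coeff x.1 * P₂.coeff x.2‖ < Pn2 := by
      refine na_sum_lt hna _ _ hPn2pos ?_
      rintro ⟨i, j⟩ hij
      have hij1 : i + j = a := by
        have := Finset.mem_of_mem_erase hij
        simpa using this
      have hne : (i, j) ≠ (a, 0) := Finset.ne_of_mem_erase hij
      have hj1 : 1 ≤ j := by
        rcases Nat.eq_zero_or_pos j with rfl | h
        · exfalso; apply hne; simp at hij1 ⊢; omega
        · exact h
      have hile : i ≤ a := by omega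
      have hji : a - i = j := by omega
      have h1' : ‖P₁.coeff i‖ ≤ t ^ j := by
        have := coeffA hna h0t.le s₁ hs₁small i hile
        rwa [hji] at this
      have h2' : ‖P₂.coeff j‖ * t ^ j < Pn2 := coeffB hna h0t s₂ hs₂big j hj1
      calc ‖P₁.coeff i * P₂.coeff j‖ = ‖P₁.coeff i‖ * ‖P₂.coeff j‖ := norm_mul _ _
        _ ≤ t ^ j * ‖P₂.coeff j‖ :=
            mul_le_mul_of_nonneg_right h1' (norm_nonneg _)
        _ = ‖P₂.coeff j‖ * t ^ j := mul_comm _ _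
        _ < Pn2 := h2'
    calc Pn2 = ‖P₂.coeff 0‖ := hP₂0.symm
      _ ≤ ‖P₂.coeff 0 + ∑ x ∈ (Finset.HasAntidiagonal.antidiagonal a).erase (a, 0),
            P₁.coeff x.1 * P₂.coeff x.2‖ := na_le_of_lt hna (by rw [hP₂0]; exact hrest)
  have hcB : ‖c‖ * Pn2 ≤ B := by
    have := hB a
    rw [hprod, coeff_C_mul, norm_mul] at this
    exact le_trans (mul_le_mul_of_nonneg_left hcoeffa (norm_nonneg c)) this
  have h1' : 1 ≤ ‖c‖ * (Pn1 * Pn2) := by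
    have := h1
    rw [hprod, coeff_C_mul, norm_mul, mul_coeff_zero, norm_mul,
      norm_coeff_zero_prod s₁, norm_coeff_zero_prod s₂] at this
    exact this
  have hPn1le : Pn1 ≤ t ^ a := prod_norm_le_pow h0t.le s₁ hs₁small
  have hchain : 1 ≤ B * t ^ a := by
    have hc0 : 0 ≤ ‖c‖ * Pn2 := mul_nonneg (norm_nonneg c) hPn2pos.le
    calc (1:ℝ) ≤ ‖c‖ * (Pn1 * Pn2) := h1'
      _ = (‖c‖ * Pn2) * Pn1 := by ring
      _ ≤ B * Pn1 := mul_le_mul_of_nonneg_right hcB hPn1nonneg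
      _ ≤ B * t ^ a := by
          have hB0 : 0 ≤ B := le_trans hc0 hcB
          exact mul_le_mul_of_nonneg_left hPn1le hB0
  have hB0 : 0 < B := by
    by_contra hle
    push_neg at hle
    have : B * t ^ a ≤ 0 := mul_nonpos_of_nonpos_of_nonneg hle (by positivity)
    linarith
  have hinv : B⁻¹ ≤ t ^ a := by
    rw [inv_le_iff_one_le_mul₀ hB0]
    linarith [hchain]
  have hcount : s.count lam ≤ a := by
    have h1 : s.count lam = s₁.count lam := by
      rw [hs₁]
      exact (Multiset.count_filter_of_pos (p := fun μ => ‖μ‖ ≤ t) (s := s) (a := lam)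
        le_rfl).symm
    rw [h1]
    exact Multiset.count_le_card lam s₁
  exact le_trans hinv (pow_le_pow_of_le_one h0t.le ht1 hcount)

lemma trailingCoeff_map_inj {R S : Type*} [CommRing R] [CommRing S] (f : R →+* S)
    (hf : Function.Injective f) (p : R[X]) :
    (p.map f).trailingCoeff = f p.trailingCoeff := by
  have hsupp : (p.map f).support = p.support := by
    ext i
    simp only [Polynomial.mem_support_iff, Polynomial.coeff_map]
    constructor
    · intro h h2; exact h (by rw [h2, map_zero])
    · intro h h2; exact h (hf (by rw [h2, map_zero]))
  have htd : (p.map f).natTrailingDegree = p.natTrailingDegree := by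
    unfold Polynomial.natTrailingDegree Polynomial.trailingDegree
    rw [hsupp]
  rw [Polynomial.trailingCoeff, Polynomial.trailingCoeff, htd, Polynomial.coeff_map]

lemma trailingCoeff_finset_prod {S : Type*} [CommRing S] [IsDomain S] {ι : Type*}
    (s : Finset ι) (P : ι → Polynomial S) :
    (∏ i ∈ s, P i).trailingCoeff = ∏ i ∈ s, (P i).trailingCoeff := by
  induction s using Finset.induction_on with
  | empty => simp [Polynomial.trailingCoeff]
  | insert _ _ hni ih =>
    rename_i a s'
    rw [Finset.prod_insert hni, Finset.prod_insert hni, Polynomial.trailingCoeff_mul, ih]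

lemma real_pow_eq_one {x : ℝ} (hx : 0 ≤ x) {n : ℕ} (hn : n ≠ 0) (h : x ^ n = 1) :
    x = 1 := by
  rcases lt_trichotomy x 1 with hlt | heq | hgt
  · have := pow_lt_one₀ hx hlt hn
    rw [h] at this
    exact absurd this (lt_irrefl _)
  · exact heq
  · have := one_lt_pow₀ hgt hn
    rw [h] at this
    exact absurd this (lt_irrefl _)

end St7Aux

variable (Fq : Type) [Field Fq] [Fintype Fq]
variable (C : Type) [NormedField C] [CompleteSpace C] [IsAlgClosed C]
  [Algebra (RatFunc Fq) C]

/-- The algebraic closure `k̄` of `k = Fq(T)` inside `C_∞`. -/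
def kbar : IntermediateField (RatFunc Fq) C := algebraicClosure (RatFunc Fq) C

/-- The image of `T` in `C_∞`. -/
def Tc : C :=
  algebraMap (RatFunc Fq) C (algebraMap (Polynomial Fq) (RatFunc Fq) Polynomial.X)

/-- `k̄` is an algebra over `A = Fq[T]`. -/
instance : Algebra (Polynomial Fq) ↥(kbar Fq C) :=
  ((algebraMap (RatFunc Fq) ↥(kbar Fq C)).comp
    (algebraMap (Polynomial Fq) (RatFunc Fq))).toAlgebra

/-- The size `[[x]] = max_τ |τ x|_∞`, the max over all automorphisms `τ` of `k̄/k`. -/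
def size (x : ↥(kbar Fq C)) : ℝ :=
  ⨆ τ : (↥(kbar Fq C) ≃ₐ[RatFunc Fq] ↥(kbar Fq C)), ‖(τ x : C)‖

variable (K₀ : IntermediateField (RatFunc Fq) ↥(kbar Fq C))

/-- `K`: the closure of `K₀` in `k̄` under the extraction of `q`-th roots. -/
def Kset : Set ↥(kbar Fq C) :=
  {x : ↥(kbar Fq C) | ∃ ν : ℕ, x ^ (Fintype.card Fq) ^ ν ∈ K₀}

/-- `O`: the integral closure of `A` in `K`. -/
def Oset : Set ↥(kbar Fq C) :=
  {x : ↥(kbar Fq C) | x ∈ Kset Fq C K₀ ∧ IsIntegral (Polynomial Fq) x}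

/-- `O₀ = O ∩ K₀`. -/
def O0set : Set ↥(kbar Fq C) :=
  {x : ↥(kbar Fq C) | x ∈ K₀ ∧ IsIntegral (Polynomial Fq) x}




namespace St7Main

open St7Aux

lemma bddAbove_conj (x : ↥(kbar Fq C)) :
    BddAbove (Set.range fun τ : (↥(kbar Fq C) ≃ₐ[RatFunc Fq] ↥(kbar Fq C)) => ‖(τ x : C)‖) := by
  haveI halg : Algebra.IsAlgebraic (RatFunc Fq) ↥(kbar Fq C) :=
    algebraicClosure.isAlgebraic (RatFunc Fq) C
  have hx : IsIntegral (RatFunc Fq) x := (Algebra.IsAlgebraic.isAlgebraic x).isIntegral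
  have hne : minpoly (RatFunc Fq) x ≠ 0 := minpoly.ne_zero hx
  have hsub : (Set.range fun τ : (↥(kbar Fq C) ≃ₐ[RatFunc Fq] ↥(kbar Fq C)) => ‖(τ x : C)‖)
      ⊆ ↑((((minpoly (RatFunc Fq) x).aroots C).toFinset.image fun z => ‖z‖)) := by
    rintro r ⟨τ, rfl⟩
    refine Finset.mem_coe.mpr (Finset.mem_image.mpr ⟨((τ x : ↥(kbar Fq C)) : C), ?_, rfl⟩)
    rw [Multiset.mem_toFinset, Polynomial.mem_aroots]
    refine ⟨hne, ?_⟩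
    have h1 : Polynomial.aeval (τ x) (minpoly (RatFunc Fq) x) = 0 := by
      have h3 := Polynomial.aeval_algHom_apply τ.toAlgHom x (minpoly (RatFunc Fq) x)
      rw [minpoly.aeval, map_zero] at h3
      exact h3
    have h2 := Polynomial.aeval_algHom_apply (kbar Fq C).val (τ x) (minpoly (RatFunc Fq) x)
    rw [h1, map_zero] at h2
    exact h2
  exact BddAbove.mono hsub (Finset.bddAbove _)

lemma conj_le_size (x : ↥(kbar Fq C)) (τ : ↥(kbar Fq C) ≃ₐ[RatFunc Fq] ↥(kbar Fq C)) :
    ‖(τ x : C)‖ ≤ size Fq C x :=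
  le_ciSup (bddAbove_conj Fq C x) τ

lemma norm_le_size (x : ↥(kbar Fq C)) : ‖(x : C)‖ ≤ size Fq C x := by
  have h := conj_le_size Fq C x AlgEquiv.refl
  simpa using h

lemma size_nonneg (x : ↥(kbar Fq C)) : 0 ≤ size Fq C x :=
  le_trans (norm_nonneg _) (norm_le_size Fq C x)

lemma normA_ge_one (hna : ∀ x y : C, ‖x + y‖ ≤ max ‖x‖ ‖y‖)
    (hT : ‖Tc Fq C‖ = (Fintype.card Fq : ℝ))
    (a : Polynomial Fq) (ha : a ≠ 0) :
    1 ≤ ‖algebraMap (RatFunc Fq) C (algebraMap (Polynomial Fq) (RatFunc Fq) a)‖ := by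
  have hq1 : (1:ℝ) < (Fintype.card Fq : ℝ) := by
    exact_mod_cast Fintype.one_lt_card (α := Fq)
  set q : ℝ := (Fintype.card Fq : ℝ) with hq
  set χ : Polynomial Fq →+* C :=
    (algebraMap (RatFunc Fq) C).comp (algebraMap (Polynomial Fq) (RatFunc Fq)) with hχ
  have hX : ‖χ Polynomial.X‖ = q := hT
  have hC : ∀ c : Fq, c ≠ 0 → ‖χ (Polynomial.C c)‖ = 1 := by
    intro c hc
    have hpow : (χ (Polynomial.C c)) ^ (Fintype.card Fq - 1) = 1 := by
      rw [← map_pow, ← Polynomial.C_pow, FiniteField.pow_card_sub_one_eq_one c hc,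
        Polynomial.C_1, map_one]
    have h2 := congrArg norm hpow
    rw [norm_pow, norm_one] at h2
    have hn : Fintype.card Fq - 1 ≠ 0 := by
      have := Fintype.one_lt_card (α := Fq); omega
    exact St7Aux.real_pow_eq_one (norm_nonneg _) hn h2
  have hle : ∀ b : Polynomial Fq, ‖χ b‖ ≤ q ^ b.natDegree := by
    intro b
    conv_lhs => rw [b.as_sum_support]
    rw [map_sum]
    refine St7Aux.na_sum_le hna _ _ (by positivity) ?_
    intro i hi
    rw [← Polynomial.C_mul_X_pow_eq_monomial, map_mul, map_pow, norm_mul, norm_pow, hX]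
    have hci : b.coeff i ≠ 0 := Polynomial.mem_support_iff.mp hi
    rw [hC _ hci, one_mul]
    exact pow_le_pow_right₀ hq1.le (Polynomial.le_natDegree_of_mem_supp i hi)
  have heq : ∀ n, ∀ b : Polynomial Fq, b ≠ 0 → b.natDegree ≤ n → ‖χ b‖ = q ^ b.natDegree := by
    intro n
    induction n with
    | zero =>
      intro b hb h0
      obtain ⟨c, rfl⟩ := Polynomial.natDegree_eq_zero.mp (Nat.le_zero.mp h0)
      have hc : c ≠ 0 := by rintro rfl; simp at hb
      rw [hC c hc, Polynomial.natDegree_C, pow_zero]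
    | succ n ih =>
      intro b hb hn1
      rcases Nat.lt_or_ge b.natDegree (n+1) with hlt | hge
      · exact ih b hb (by omega)
      · have hsum := b.eraseLead_add_C_mul_X_pow
        have hbig : ‖χ (Polynomial.C b.leadingCoeff * Polynomial.X ^ b.natDegree)‖
            = q ^ b.natDegree := by
          rw [map_mul, map_pow, norm_mul, norm_pow, hX,
            hC _ (Polynomial.leadingCoeff_ne_zero.mpr hb), one_mul]
        rcases eq_or_ne b.eraseLead 0 with h0 | h0
        · calc ‖χ b‖ = ‖χ (Polynomial.C b.leadingCoeff * Polynomial.X ^ b.natDegree)‖ := by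
                conv_lhs => rw [← hsum, h0, zero_add]
            _ = q ^ b.natDegree := hbig
        · have hlt2 : b.eraseLead.natDegree < b.natDegree :=
            Polynomial.natDegree_lt_natDegree h0 (Polynomial.degree_eraseLead_lt hb)
          have hsmall : ‖χ b.eraseLead‖ < q ^ b.natDegree :=
            lt_of_le_of_lt (hle _) (pow_lt_pow_right₀ hq1 hlt2)
          calc ‖χ b‖ = ‖χ (Polynomial.C b.leadingCoeff * Polynomial.X ^ b.natDegree)
                + χ b.eraseLead‖ := by
                conv_lhs => rw [← hsum]
                rw [map_add, add_comm]
            _ = ‖χ (Polynomial.C b.leadingCoeff * Polynomial.X ^ b.natDegree)‖ :=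
                St7Aux.na_add_eq hna (by rw [hbig]; exact hsmall)
            _ = q ^ b.natDegree := hbig
  have := heq a.natDegree a ha le_rfl
  rw [show algebraMap (RatFunc Fq) C (algebraMap (Polynomial Fq) (RatFunc Fq) a) = χ a from rfl,
    this]
  exact one_le_pow₀ hq1.le

end St7Main

set_option maxHeartbeats 10000000 in
theorem statement7
    (hna : ∀ x y : C, ‖x + y‖ ≤ max ‖x‖ ‖y‖)
    (hT : ‖Tc Fq C‖ = (Fintype.card Fq : ℝ))
    (hK₀fin : FiniteDimensional (RatFunc Fq) ↥K₀)
    (hK₀sep : Algebra.IsSeparable (RatFunc Fq) ↥K₀)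
    (F : Polynomial ↥(kbar Fq C)) (hF : F ≠ 0)
    (hcoeff : ∀ i, F.coeff i ∈ Oset Fq C K₀)
    (lam : ↥(kbar Fq C)) (hlam : lam ≠ 0) (hroot : F.eval lam = 0) :
    ‖(lam : C)‖ ^ (F.rootMultiplicity lam) ≥
      (Finset.sup' (Finset.range (F.natDegree + 1))
          (Finset.nonempty_range_iff.mpr (Nat.succ_ne_zero _))
          fun i => size Fq C (F.coeff i)) ^
        (-(Module.finrank (RatFunc Fq) ↥K₀ : ℤ)) := by
  classical
  haveI hACl : IsAlgClosure (RatFunc Fq) ↥(kbar Fq C) :=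
    algebraicClosure.isAlgClosure (RatFunc Fq) C
  haveI hkbAC : IsAlgClosed ↥(kbar Fq C) := hACl.isAlgClosed
  haveI hkbNormal : Normal (RatFunc Fq) ↥(kbar Fq C) := IsAlgClosure.normal _ _
  haveI halg : Algebra.IsAlgebraic (RatFunc Fq) ↥(kbar Fq C) := hACl.isAlgebraic
  -- characteristic
  set p : ℕ := ringChar Fq with hpdef
  have hp : p.Prime := CharP.char_is_prime Fq p
  obtain ⟨e, -, hcard⟩ := FiniteField.card Fq p
  haveI : CharP (RatFunc Fq) p :=
    charP_of_injective_algebraMap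
      (IsFractionRing.injective (Polynomial Fq) (RatFunc Fq)) p
  haveI hkbchar : CharP ↥(kbar Fq C) p :=
    charP_of_injective_algebraMap
      (algebraMap (RatFunc Fq) ↥(kbar Fq C)).injective p
  haveI : ExpChar ↥(kbar Fq C) p := ExpChar.prime hp
  -- choose the q-power exponent m
  set q : ℕ := Fintype.card Fq with hqdef
  have hq2 : 2 ≤ q := Fintype.one_lt_card
  choose g hg using fun i => (hcoeff i).1
  set m : ℕ := (Finset.range (F.natDegree + 1)).sup g with hm
  set N : ℕ := q ^ m with hN
  have hNne : N ≠ 0 := by positivity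
  have hNpow : ∀ i, i ≤ F.natDegree → (F.coeff i) ^ N ∈ K₀ := by
    intro i hi
    have hgi : g i ≤ m := Finset.le_sup (Finset.mem_range.mpr (by omega))
    have h3 : (F.coeff i) ^ N = ((F.coeff i) ^ q ^ g i) ^ q ^ (m - g i) := by
      rw [← pow_mul, ← pow_add]
      congr 1
      rw [hN]
      congr 1
      omega
    rw [h3]
    exact pow_mem (hg i) _
  set F₁ : Polynomial ↥(kbar Fq C) := F ^ N with hF₁def
  have hF₁ : F₁ ≠ 0 := pow_ne_zero _ hF
  -- coefficients of F₁
  have hNpp : N = p ^ ((e : ℕ) * m) := by rw [hN, hcard, ← pow_mul]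
  have hfrobapp : ∀ x : ↥(kbar Fq C),
      ((frobenius ↥(kbar Fq C) p) ^ ((e : ℕ) * m)) x = x ^ p ^ ((e : ℕ) * m) := by
    intro x
    have h1 : ((frobenius ↥(kbar Fq C) p) ^ ((e : ℕ) * m)) x
        = (frobenius ↥(kbar Fq C) p)^[(e : ℕ) * m] x :=
      congrFun (RingHom.coe_pow _ _) x
    rw [h1, ← coe_iterateFrobenius, iterateFrobenius_def]
  have hcoeffF₁ : ∀ i, F₁.coeff i = 0 ∨
      ∃ j, j ≤ F.natDegree ∧ F₁.coeff i = (F.coeff j) ^ N := by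
    intro i
    have hmap : Polynomial.map ((frobenius ↥(kbar Fq C) p) ^ ((e : ℕ) * m))
        (Polynomial.expand _ (p ^ ((e : ℕ) * m)) F) = F ^ p ^ ((e : ℕ) * m) := by
      rw [← Polynomial.map_iterateFrobenius_expand (p := p)]
      congr 1
      exact RingHom.ext fun x => by rw [hfrobapp, iterateFrobenius_def]
    have h1 : F₁.coeff i =
        ((frobenius ↥(kbar Fq C) p) ^ ((e : ℕ) * m))
          ((Polynomial.expand _ (p ^ ((e : ℕ) * m)) F).coeff i) := by
      rw [hF₁def, hNpp, ← hmap, Polynomial.coeff_map]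
    rw [hfrobapp, ← hNpp] at h1
    rw [Polynomial.coeff_expand (by positivity)] at h1
    split_ifs at h1 with hdvd
    · by_cases hj : i / N ≤ F.natDegree
      · exact Or.inr ⟨_, hj, h1⟩
      · left
        have hz : F.coeff (i / N) = 0 :=
          Polynomial.coeff_eq_zero_of_natDegree_lt (by omega)
        rw [h1, hz, zero_pow hNne]
    · left
      rw [h1, zero_pow hNne]
  have hK₀c : ∀ i, F₁.coeff i ∈ K₀ := by
    intro i
    rcases hcoeffF₁ i with h | ⟨j, hj, h⟩
    · rw [h]; exact zero_mem K₀
    · rw [h]; exact hNpow j hj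
  have hIntc : ∀ i, IsIntegral (Polynomial Fq) (F₁.coeff i) := by
    intro i
    rcases hcoeffF₁ i with h | ⟨j, hj, h⟩
    · rw [h]; exact isIntegral_zero
    · rw [h]; exact ((hcoeff j).2).pow N
  -- the size bound M
  rw [ge_iff_le]
  set M : ℝ := Finset.sup' (Finset.range (F.natDegree + 1))
      (Finset.nonempty_range_iff.mpr (Nat.succ_ne_zero _))
      (fun i => size Fq C (F.coeff i)) with hMdef
  have hMi : ∀ i, i ≤ F.natDegree → size Fq C (F.coeff i) ≤ M := by
    intro i hi
    exact Finset.le_sup' (fun i => size Fq C (F.coeff i)) (Finset.mem_range.mpr (by omega))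
  have hM0 : 0 < M := by
    have h1 : F.coeff F.natDegree ≠ 0 := by
      rw [← Polynomial.leadingCoeff]
      exact Polynomial.leadingCoeff_ne_zero.mpr hF
    have h2 : ((F.coeff F.natDegree : ↥(kbar Fq C)) : C) ≠ 0 := by
      intro h
      exact h1 (Subtype.ext h)
    calc (0:ℝ) < ‖((F.coeff F.natDegree : ↥(kbar Fq C)) : C)‖ := norm_pos_iff.mpr h2
      _ ≤ size Fq C (F.coeff F.natDegree) := St7Main.norm_le_size Fq C _
      _ ≤ M := hMi _ le_rfl
  have hsize : ∀ i, ∀ τ : (↥(kbar Fq C) ≃ₐ[RatFunc Fq] ↥(kbar Fq C)),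
      ‖(τ (F₁.coeff i) : C)‖ ≤ M ^ N := by
    intro i τ
    rcases hcoeffF₁ i with h | ⟨j, hj, h⟩
    · rw [h, map_zero]
      simp only [ZeroMemClass.coe_zero, norm_zero]
      positivity
    · rw [h, map_pow]
      push_cast
      rw [norm_pow]
      calc ‖(τ (F.coeff j) : C)‖ ^ N ≤ (size Fq C (F.coeff j)) ^ N :=
            pow_le_pow_left₀ (norm_nonneg _) (St7Main.conj_le_size Fq C _ τ) N
        _ ≤ M ^ N := pow_le_pow_left₀ (St7Main.size_nonneg Fq C _) (hMi j hj) N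
  -- embeddings and the product polynomial G
  set d : ℕ := Module.finrank (RatFunc Fq) ↥K₀ with hd
  have hcardE : Fintype.card (↥K₀ →ₐ[RatFunc Fq] ↥(kbar Fq C)) = d :=
    AlgHom.card (RatFunc Fq) ↥K₀ ↥(kbar Fq C)
  set tau : (↥K₀ →ₐ[RatFunc Fq] ↥(kbar Fq C)) →
      (↥(kbar Fq C) →ₐ[RatFunc Fq] ↥(kbar Fq C)) :=
    fun σ => σ.liftNormal ↥(kbar Fq C) with htaudef
  have htau : ∀ σ (x : ↥K₀), tau σ (algebraMap ↥K₀ ↥(kbar Fq C) x) = σ x := by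
    intro σ x
    have := AlgHom.liftNormal_commutes σ ↥(kbar Fq C) x
    simpa using this
  set G : Polynomial ↥(kbar Fq C) :=
    ∏ σ : ↥K₀ →ₐ[RatFunc Fq] ↥(kbar Fq C), Polynomial.map (tau σ).toRingHom F₁ with hGdef
  have hGne : G ≠ 0 := by
    rw [hGdef]
    rw [Finset.prod_ne_zero_iff]
    intro σ _
    exact Polynomial.map_ne_zero hF₁
  have hdvdG : F₁ ∣ G := by
    have hval : Polynomial.map (tau K₀.val).toRingHom F₁ = F₁ := by
      ext i
      rw [Polynomial.coeff_map]
      have : F₁.coeff i = algebraMap ↥K₀ ↥(kbar Fq C) ⟨F₁.coeff i, hK₀c i⟩ := rfl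
      rw [this]
      rw [show (tau K₀.val).toRingHom
          (algebraMap ↥K₀ ↥(kbar Fq C) ⟨F₁.coeff i, hK₀c i⟩)
          = tau K₀.val (algebraMap ↥K₀ ↥(kbar Fq C) ⟨F₁.coeff i, hK₀c i⟩) from rfl]
      rw [htau K₀.val ⟨F₁.coeff i, hK₀c i⟩]
      rfl
    rw [hGdef]
    have h2 := Finset.dvd_prod_of_mem
      (fun σ : ↥K₀ →ₐ[RatFunc Fq] ↥(kbar Fq C) => Polynomial.map (tau σ).toRingHom F₁)
      (Finset.mem_univ K₀.val)
    beta_reduce at h2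
    rw [hval] at h2
    exact h2
  -- pass to C
  set Φ : ↥(kbar Fq C) →+* C := algebraMap ↥(kbar Fq C) C with hΦdef
  set G_C : Polynomial C := G.map Φ with hGCdef
  have hGCne : G_C ≠ 0 := Polynomial.map_ne_zero hGne
  have hGCcoeff : ∀ j, ‖G_C.coeff j‖ ≤ (M ^ N) ^ d := by
    have hprodform : G_C = ∏ σ : ↥K₀ →ₐ[RatFunc Fq] ↥(kbar Fq C),
        Polynomial.map (Φ.comp (tau σ).toRingHom) F₁ := by
      rw [hGCdef, hGdef, Polynomial.map_prod]
      simp only [Polynomial.map_map]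
    intro j
    rw [hprodform]
    have := St7Aux.coeff_prod_bound hna Finset.univ
      (fun σ => Polynomial.map (Φ.comp (tau σ).toRingHom) F₁)
      (D := M ^ N) (by positivity) ?_ j
    · rwa [Finset.card_univ, hcardE] at this
    · intro σ _ jj
      rw [Polynomial.coeff_map]
      have hτeq : (Φ.comp (tau σ).toRingHom) (F₁.coeff jj)
          = ((AlgEquiv.ofBijective (tau σ)
              (Algebra.IsAlgebraic.algHom_bijective (tau σ))) (F₁.coeff jj) : C) := rfl
      rw [hτeq]
      exact hsize jj _
  -- the trailing coefficient of G_C has norm at least 1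
  have htrailG : 1 ≤ ‖G_C.trailingCoeff‖ := by
    set b₁ : ↥(kbar Fq C) := F₁.trailingCoeff with hb₁def
    have hb₁K : b₁ ∈ K₀ := hK₀c _
    have hb₁int : IsIntegral (Polynomial Fq) b₁ := hIntc _
    have hb₁ne : b₁ ≠ 0 := by
      rw [hb₁def]
      exact Polynomial.trailingCoeff_nonzero_iff_nonzero.mpr hF₁
    set b' : ↥K₀ := ⟨b₁, hb₁K⟩ with hb'def
    have htcG : G.trailingCoeff = ∏ σ : ↥K₀ →ₐ[RatFunc Fq] ↥(kbar Fq C), tau σ b₁ := by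
      rw [hGdef, St7Aux.trailingCoeff_finset_prod]
      refine Finset.prod_congr rfl ?_
      intro σ _
      rw [St7Aux.trailingCoeff_map_inj _ (RingHom.injective _)]
      rfl
    have hb'map : algebraMap ↥K₀ ↥(kbar Fq C) b' = b₁ := rfl
    have hnormprod : ∏ σ : ↥K₀ →ₐ[RatFunc Fq] ↥(kbar Fq C), tau σ b₁
        = algebraMap (RatFunc Fq) ↥(kbar Fq C) (Algebra.norm (RatFunc Fq) b') := by
      rw [Algebra.norm_eq_prod_embeddings]
      refine Finset.prod_congr rfl ?_
      intro σ _
      rw [← hb'map, htau]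
    set u : RatFunc Fq := Algebra.norm (RatFunc Fq) b' with hudef
    have hu0 : u ≠ 0 := by
      rw [hudef, Algebra.norm_ne_zero_iff]
      intro h
      apply hb₁ne
      have := congrArg (algebraMap ↥K₀ ↥(kbar Fq C)) h
      rw [hb'map, map_zero] at this
      exact this
    letI : Algebra (Polynomial Fq) ↥K₀ :=
      ((algebraMap (RatFunc Fq) ↥K₀).comp (algebraMap (Polynomial Fq) (RatFunc Fq))).toAlgebra
    letI : IsScalarTower (Polynomial Fq) (RatFunc Fq) ↥K₀ :=
      IsScalarTower.of_algebraMap_eq fun x => rfl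
    haveI : IsScalarTower (Polynomial Fq) (RatFunc Fq) ↥(kbar Fq C) :=
      IsScalarTower.of_algebraMap_eq fun x => rfl
    have hb'int : IsIntegral (Polynomial Fq) b' := by
      have hinj : Function.Injective (K₀.val.restrictScalars (Polynomial Fq)) :=
        K₀.val.injective
      refine (isIntegral_algHom_iff (K₀.val.restrictScalars (Polynomial Fq)) hinj).mp ?_
      exact hb₁int
    have huint : IsIntegral (Polynomial Fq) u := Algebra.isIntegral_norm (RatFunc Fq) hb'int
    obtain ⟨aA, haA⟩ := IsIntegrallyClosed.isIntegral_iff.mp huint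
    have haA0 : aA ≠ 0 := by
      rintro rfl
      rw [map_zero] at haA
      exact hu0 haA.symm
    have hGCtrail : G_C.trailingCoeff = Φ G.trailingCoeff :=
      St7Aux.trailingCoeff_map_inj Φ (RingHom.injective Φ) G
    rw [hGCtrail, htcG, hnormprod, ← haA]
    have hcomp : Φ (algebraMap (RatFunc Fq) ↥(kbar Fq C)
        (algebraMap (Polynomial Fq) (RatFunc Fq) aA))
        = algebraMap (RatFunc Fq) C (algebraMap (Polynomial Fq) (RatFunc Fq) aA) := by
      rw [hΦdef, ← IsScalarTower.algebraMap_apply]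
    rw [hcomp]
    exact St7Main.normA_ge_one Fq C hna hT aA haA0
  -- factor out the zero roots of G_C
  set lc : C := G_C.leadingCoeff with hlcdef
  have hlcne : lc ≠ 0 := Polynomial.leadingCoeff_ne_zero.mpr hGCne
  have hsplitG : G_C = Polynomial.C lc * (G_C.roots.map fun a => Polynomial.X - Polynomial.C a).prod :=
    Polynomial.Splits.eq_prod_roots (IsAlgClosed.splits _)
  set e0 : ℕ := G_C.roots.count 0 with he0
  set s : Multiset C := G_C.roots.filter (fun μ => ¬ μ = 0) with hsdef
  have hroots : G_C.roots.filter (fun μ => μ = 0) + s = G_C.roots :=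
    Multiset.filter_add_not _ _
  have hzf : G_C.roots.filter (fun μ => μ = 0) = Multiset.replicate e0 0 := by
    rw [he0]
    exact Multiset.filter_eq' _ _
  set Hpoly : Polynomial C := Polynomial.C lc * (s.map fun a => Polynomial.X - Polynomial.C a).prod
    with hHdef
  have hGfact : G_C = Hpoly * Polynomial.X ^ e0 := by
    conv_lhs => rw [hsplitG]
    rw [← hroots, Multiset.map_add, Multiset.prod_add, hzf]
    rw [Multiset.map_replicate, Multiset.prod_replicate]
    simp only [map_zero, sub_zero]
    rw [hHdef]
    ring
  have hHcoeff : ∀ j, Hpoly.coeff j = G_C.coeff (j + e0) := by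
    intro j
    rw [hGfact, Polynomial.coeff_mul_X_pow]
  have hHB : ∀ j, ‖Hpoly.coeff j‖ ≤ (M ^ N) ^ d := by
    intro j
    rw [hHcoeff]
    exact hGCcoeff _
  have hsne : ∀ μ ∈ s, μ ≠ 0 := by
    intro μ hμ
    exact (Multiset.mem_filter.mp hμ).2
  have hH0norm : ‖Hpoly.coeff 0‖ = ‖lc‖ * (s.map fun x => ‖x‖).prod := by
    rw [hHdef, Polynomial.mul_coeff_zero, Polynomial.coeff_C_zero, norm_mul,
      St7Aux.norm_coeff_zero_prod]
  have hprodpos : 0 < (s.map fun x => ‖x‖).prod := St7Aux.prod_norm_pos s hsne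
  have hH0ne : Hpoly.coeff 0 ≠ 0 := by
    intro h
    have h2 : 0 < ‖lc‖ * (s.map fun x => ‖x‖).prod :=
      mul_pos (norm_pos_iff.mpr hlcne) hprodpos
    rw [h, norm_zero] at hH0norm
    linarith
  have hH1 : 1 ≤ ‖Hpoly.coeff 0‖ := by
    have hntH : Hpoly.natTrailingDegree = 0 :=
      Nat.le_zero.mp (Polynomial.natTrailingDegree_le_of_ne_zero hH0ne)
    have htrH : Hpoly.trailingCoeff = Hpoly.coeff 0 := by
      rw [Polynomial.trailingCoeff, hntH]
    have htrX : (Polynomial.X ^ e0 : Polynomial C).trailingCoeff = 1 := by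
      rw [Polynomial.trailingCoeff, Polynomial.natTrailingDegree_X_pow,
        Polynomial.coeff_X_pow]
      simp
    have heqq : G_C.trailingCoeff = Hpoly.coeff 0 := by
      rw [hGfact, Polynomial.trailingCoeff_mul, htrX, mul_one, htrH]
    rw [← heqq]
    exact htrailG
  set ν : ℕ := F.rootMultiplicity lam with hν
  set lamC : C := (lam : C) with hlamCdef
  have hlamCne : lamC ≠ 0 := by
    intro h
    exact hlam (Subtype.ext h)
  have hlamCpos : 0 < ‖lamC‖ := norm_pos_iff.mpr hlamCne
  have hB1 : 1 ≤ (M ^ N) ^ d := le_trans hH1 (hHB 0)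
  have hMd1 : 1 ≤ M ^ d := by
    by_contra hlt
    push_neg at hlt
    have h2 : ((M : ℝ) ^ d) ^ N < 1 := pow_lt_one₀ (by positivity) hlt hNne
    rw [← pow_mul, mul_comm, pow_mul] at h2
    linarith [hB1]
  have hzpow : M ^ (-(d:ℤ)) = ((M:ℝ) ^ d)⁻¹ := by
    rw [zpow_neg, zpow_natCast]
  by_cases hcase : ‖lamC‖ ≤ 1
  · have hdvdC : (Polynomial.X - Polynomial.C lamC) ^ (ν * N) ∣ G_C := by
      have h1 : (Polynomial.X - Polynomial.C lam) ^ ν ∣ F :=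
        Polynomial.pow_rootMultiplicity_dvd F lam
      have h2 : ((Polynomial.X - Polynomial.C lam) ^ ν) ^ N ∣ F ^ N := pow_dvd_pow_of_dvd h1 N
      rw [← pow_mul] at h2
      have h3 : (Polynomial.X - Polynomial.C lam) ^ (ν * N) ∣ G := dvd_trans h2 hdvdG
      have h4 := Polynomial.map_dvd Φ h3
      rw [Polynomial.map_pow, Polynomial.map_sub, Polynomial.map_X, Polynomial.map_C] at h4
      exact h4
    have hκ : ν * N ≤ s.count lamC := by
      have h1 : s.count lamC = G_C.roots.count lamC := by
        rw [hsdef]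
        exact Multiset.count_filter_of_pos (p := fun μ => ¬ μ = 0) (s := G_C.roots)
          (a := lamC) hlamCne
      rw [h1, Polynomial.count_roots]
      exact (Polynomial.le_rootMultiplicity_iff hGCne).mpr hdvdC
    have hcore : (((M:ℝ) ^ N) ^ d)⁻¹ ≤ ‖lamC‖ ^ (s.count lamC) :=
      St7Aux.core hna s lc lamC ((M ^ N) ^ d) hlamCpos hcase (fun j => hHB j) hH1
    have hstep : ‖lamC‖ ^ (s.count lamC) ≤ ‖lamC‖ ^ (ν * N) :=
      pow_le_pow_of_le_one (norm_nonneg _) hcase hκ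
    have hfinal : (((M:ℝ) ^ d) ^ N)⁻¹ ≤ (‖lamC‖ ^ ν) ^ N := by
      calc (((M:ℝ)^d)^N)⁻¹ = ((M^N)^d)⁻¹ := by rw [← pow_mul, ← pow_mul, mul_comm]
        _ ≤ ‖lamC‖ ^ (s.count lamC) := hcore
        _ ≤ ‖lamC‖ ^ (ν * N) := hstep
        _ = (‖lamC‖ ^ ν) ^ N := pow_mul _ _ _
    rw [← inv_pow] at hfinal
    have hlast := (pow_le_pow_iff_left₀ (by positivity) (by positivity) hNne).mp hfinal
    rw [hzpow]
    exact hlast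
  · push_neg at hcase
    rw [hzpow]
    calc ((M:ℝ)^d)⁻¹ ≤ 1 := by
          have hpos : (0:ℝ) < M ^ d := by positivity
          rw [inv_le_one₀ hpos]
          exact hMd1
      _ ≤ ‖lamC‖ ^ ν := one_le_pow₀ hcase.le
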